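/- For all positive integers m, n and every complex number t, the sum Σ_{H ≤ ℤ_m × ℤ_n} |H|^t over all subgroups H of ℤ_m × ℤ_n equals Σ_{d ∣ gcd(m,n)} φ(d)·d^t·σ_t(m/d)·σ_t(n/d), where σ_t(n) = Σ_{e ∣ n} e^t. -/

import Mathlib

open AddSubgroup

section PartA
variable {M N : Type*} [AddCommGroup M] [AddCommGroup N]

/-- subgroup of `M × N` built from projection `A`, slice `B`, and `f : A →+ N ⧸ B`. -/
def smk (A : AddSubgroup M) (B : AddSubgroup N) (f : A →+ N ⧸ B) : AddSubgroup (M × N) where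
  carrier := {p | ∃ h : p.1 ∈ A, (p.2 : N ⧸ B) = f ⟨p.1, h⟩}
  zero_mem' := ⟨A.zero_mem, by
    have : (⟨(0 : M × N).1, A.zero_mem⟩ : A) = 0 := rfl
    rw [this, map_zero]; rfl⟩
  add_mem' := by
    rintro ⟨a, y⟩ ⟨a', y'⟩ ⟨h, hy⟩ ⟨h', hy'⟩
    refine ⟨A.add_mem h h', ?_⟩
    simp only [Prod.fst_add, Prod.snd_add]
    have : (⟨a + a', A.add_mem h h'⟩ : A) = ⟨a, h⟩ + ⟨a', h'⟩ := rfl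
    rw [this, map_add, ← hy, ← hy']; rfl
  neg_mem' := by
    rintro ⟨a, y⟩ ⟨h, hy⟩
    refine ⟨A.neg_mem h, ?_⟩
    simp only [Prod.fst_neg, Prod.snd_neg]
    have : (⟨-a, A.neg_mem h⟩ : A) = -⟨a, h⟩ := rfl
    rw [this, map_neg, ← hy]; rfl

lemma mem_smk {A : AddSubgroup M} {B : AddSubgroup N} {f : A →+ N ⧸ B} {p : M × N} :
    p ∈ smk A B f ↔ ∃ h : p.1 ∈ A, (p.2 : N ⧸ B) = f ⟨p.1, h⟩ := Iff.rfl

def pA (H : AddSubgroup (M × N)) : AddSubgroup M := H.map (AddMonoidHom.fst M N)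
def pB (H : AddSubgroup (M × N)) : AddSubgroup N := H.comap (AddMonoidHom.inr M N)

lemma mem_pB {H : AddSubgroup (M × N)} {y : N} : y ∈ pB H ↔ ((0 : M), y) ∈ H := Iff.rfl

lemma smk_fst (A : AddSubgroup M) (B : AddSubgroup N) (f : A →+ N ⧸ B) :
    pA (smk A B f) = A := by
  ext a
  constructor
  · rintro ⟨p, ⟨h, _⟩, rfl⟩; exact h
  · intro ha
    obtain ⟨y, hy⟩ := QuotientAddGroup.mk_surjective (f ⟨a, ha⟩)
    exact ⟨(a, y), ⟨ha, hy⟩, rfl⟩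

lemma smk_inr (A : AddSubgroup M) (B : AddSubgroup N) (f : A →+ N ⧸ B) :
    pB (smk A B f) = B := by
  ext y
  rw [mem_pB]
  constructor
  · rintro ⟨h, hy⟩
    have h0 : (⟨(0:M), h⟩ : A) = 0 := rfl
    rw [h0, map_zero] at hy
    exact (QuotientAddGroup.eq_zero_iff y).mp hy
  · intro hy
    refine ⟨A.zero_mem, ?_⟩
    have h0 : (⟨(0:M), A.zero_mem⟩ : A) = 0 := rfl
    rw [h0, map_zero]
    exact (QuotientAddGroup.eq_zero_iff y).mpr hy

lemma quot_eq (H : AddSubgroup (M × N)) {p q : M × N} (hp : p ∈ H) (hq : q ∈ H)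
    (h1 : p.1 = q.1) : (p.2 : N ⧸ pB H) = (q.2 : N ⧸ pB H) := by
  rw [QuotientAddGroup.eq]
  rw [mem_pB]
  have hmem : -p + q ∈ H := H.add_mem (H.neg_mem hp) hq
  have : (-p + q) = ((0 : M), -p.2 + q.2) := by
    ext
    · simp [h1]
    · rfl
  rwa [this] at hmem

noncomputable def pick (H : AddSubgroup (M × N)) (a : pA H) : M × N :=
  (AddSubgroup.mem_map.mp a.2).choose

lemma pick_mem (H : AddSubgroup (M × N)) (a : pA H) : pick H a ∈ H :=
  (AddSubgroup.mem_map.mp a.2).choose_spec.1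

lemma pick_fst (H : AddSubgroup (M × N)) (a : pA H) : (pick H a).1 = (a : M) :=
  (AddSubgroup.mem_map.mp a.2).choose_spec.2

noncomputable def pf (H : AddSubgroup (M × N)) : pA H →+ N ⧸ pB H where
  toFun a := (((pick H a).2 : N) : N ⧸ pB H)
  map_zero' := by
    have := quot_eq H (pick_mem H 0) H.zero_mem
      (by rw [pick_fst]; rfl)
    simpa using this
  map_add' a b := by
    have := quot_eq H (pick_mem H (a + b)) (H.add_mem (pick_mem H a) (pick_mem H b))
      (by rw [pick_fst, Prod.fst_add, pick_fst, pick_fst]; rfl)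
    simpa using this

lemma pf_eq (H : AddSubgroup (M × N)) {p : M × N} (hp : p ∈ H) (h : p.1 ∈ pA H) :
    pf H ⟨p.1, h⟩ = (p.2 : N ⧸ pB H) :=
  quot_eq H (pick_mem H ⟨p.1, h⟩) hp (by rw [pick_fst])

lemma smk_pf (H : AddSubgroup (M × N)) : smk (pA H) (pB H) (pf H) = H := by
  ext p
  rw [mem_smk]
  constructor
  · rintro ⟨h, hy⟩
    have heq : (p.2 : N ⧸ pB H) = ((pick H ⟨p.1, h⟩).2 : N ⧸ pB H) := hy
    rw [QuotientAddGroup.eq, mem_pB] at heq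
    have hp : p = pick H ⟨p.1, h⟩ - ((0 : M), -p.2 + (pick H ⟨p.1, h⟩).2) := by
      ext
    
      · show p.1 = (pick H ⟨p.1, h⟩).1 - 0
        rw [pick_fst]; show p.1 = p.1 - 0; abel
      · show p.2 = (pick H ⟨p.1, h⟩).2 - (-p.2 + (pick H ⟨p.1, h⟩).2)
        abel
    rw [hp]
    exact H.sub_mem (pick_mem H ⟨p.1, h⟩) heq
  · intro hp
    exact ⟨⟨p, hp, rfl⟩, (pf_eq H hp _).symm⟩

lemma smk_inj_f (A : AddSubgroup M) (B : AddSubgroup N) (f f' : A →+ N ⧸ B)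
    (h : smk A B f = smk A B f') : f = f' := by
  ext a
  obtain ⟨y, hy⟩ := QuotientAddGroup.mk_surjective (f a)
  have h1 : ((a : M), y) ∈ smk A B f := ⟨a.2, by rw [hy]⟩
  rw [h] at h1
  obtain ⟨h2, hy'⟩ := h1
  rw [← hy, hy']

lemma card_H [Finite M] [Finite N] (H : AddSubgroup (M × N)) :
    Nat.card H = Nat.card (pA H) * Nat.card (pB H) := by
  classical
  set π : H →+ M := (AddMonoidHom.fst M N).comp H.subtype with hπ
  have hrange : π.range = pA H := by
    rw [hπ, AddMonoidHom.range_comp, AddSubgroup.range_subtype]; rfl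
  have h1 : Nat.card H = Nat.card (H ⧸ π.ker) * Nat.card π.ker :=
    AddSubgroup.card_eq_card_quotient_mul_card_addSubgroup π.ker
  have h2 : Nat.card (H ⧸ π.ker) = Nat.card (pA H) := by
    rw [← hrange]
    exact Nat.card_congr (QuotientAddGroup.quotientKerEquivRange π).toEquiv
  have h3 : Nat.card π.ker = Nat.card (pB H) := by
    refine Nat.card_congr ⟨fun x => ⟨x.1.1.2, ?_⟩, fun y => ⟨⟨((0:M), y.1), y.2⟩, ?_⟩, ?_, ?_⟩
    · have hx : (x.1 : M × N).1 = 0 := x.2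
      rw [mem_pB]
      have : ((0:M), (x.1 : M × N).2) = (x.1 : M × N) := by rw [← hx]
      rw [this]; exact x.1.2
    · show π _ = 0
      rfl
    · rintro ⟨⟨⟨a, y⟩, hmem⟩, hker⟩
      have ha : a = 0 := hker
      subst ha; rfl
    · rintro ⟨y, hy⟩; rfl
  rw [h1, h2, h3]

end PartA


section PartB
variable (Q : Type*) [AddCommGroup Q]

/-- kernel of multiplication by `u`. -/
def nker (u : ℕ) : AddSubgroup Q where
  carrier := {q | u • q = 0}
  zero_mem' := by simp
  add_mem' := by
    intro a b ha hb
    simp only [Set.mem_setOf_eq, smul_add] at *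
    rw [ha, hb, add_zero]
  neg_mem' := by
    intro a ha
    simp only [Set.mem_setOf_eq, smul_neg] at *
    rw [ha, neg_zero]

variable {Q}

lemma mem_nker {u : ℕ} {q : Q} : q ∈ nker Q u ↔ u • q = 0 := Iff.rfl

lemma nker_spec [Finite Q] [IsAddCyclic Q] (u : ℕ) :
    ∃ x : Q, nker Q u = zmultiples x ∧ addOrderOf x = Nat.gcd u (Nat.card Q) := by
  obtain ⟨g, hg⟩ := IsAddCyclic.exists_generator (α := Q)
  have hgord : addOrderOf g = Nat.card Q := addOrderOf_eq_card_of_forall_mem_zmultiples hg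
  set w := Nat.card Q with hwdef
  have hw0 : 0 < w := Nat.card_pos
  set d := Nat.gcd u w with hd
  have hd0 : 0 < d := Nat.gcd_pos_of_pos_right u hw0
  have hdw : d ∣ w := Nat.gcd_dvd_right u w
  have hdu : d ∣ u := Nat.gcd_dvd_left u w
  obtain ⟨w', hw'⟩ := hdw
  obtain ⟨u', hu'⟩ := hdu
  have hwd : w / d = w' := by rw [hw', Nat.mul_div_cancel_left _ hd0]
  have hcop : Nat.Coprime u' w' := by
    have := Nat.coprime_div_gcd_div_gcd (m := u) (n := w) hd0
    rwa [← hd, hwd, hu', Nat.mul_div_cancel_left _ hd0] at this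
  have key : nker Q u = zmultiples (w' • g) := by
    ext q
    rw [mem_nker, mem_zmultiples_iff]
    constructor
    · intro hq
      obtain ⟨k, hk⟩ := mem_zmultiples_iff.mp (hg q)
      have hz : ((u : ℤ) * k) • g = 0 := by
        rw [mul_smul, hk, natCast_zsmul]
        exact hq
      have hdvd : ((addOrderOf g : ℕ) : ℤ) ∣ (u : ℤ) * k :=
        addOrderOf_dvd_iff_zsmul_eq_zero.mpr hz
      rw [hgord, hw', hu'] at hdvd
      push_cast at hdvd
      have hdvd' : (w' : ℤ) ∣ (u' : ℤ) * k := by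
        rcases hdvd with ⟨c, hc⟩
        refine ⟨c, ?_⟩
        have hdz : (d : ℤ) ≠ 0 := by exact_mod_cast hd0.ne'
        apply mul_left_cancel₀ hdz
        rw [← mul_assoc, ← mul_assoc]
        rw [mul_comm (d : ℤ) (u' : ℤ)] at hc
        linarith [hc]
      have hw'k : (w' : ℤ) ∣ k := by
        have hcopz : IsCoprime (w' : ℤ) (u' : ℤ) := by
          rw [Int.isCoprime_iff_gcd_eq_one]
          simpa [Int.gcd_natCast_natCast] using hcop.symm
        exact hcopz.dvd_of_dvd_mul_left hdvd'
      obtain ⟨k', hk'⟩ := hw'k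
      refine ⟨k', ?_⟩
      rw [← hk, hk', mul_comm, mul_smul, natCast_zsmul]
    · rintro ⟨k, rfl⟩
      have h1 : u • (w' • g) = 0 := by
        rw [smul_smul]
        apply addOrderOf_dvd_iff_nsmul_eq_zero.mp
        rw [hgord, hw', hu']
        exact ⟨u', by ring⟩
      rw [smul_comm (u : ℕ) k (w' • g), h1, smul_zero]
  have hw'0 : w' ≠ 0 := by rintro rfl; omega
  have hord : addOrderOf (w' • g) = d := by
    rw [addOrderOf_nsmul' g hw'0, hgord]
    have hgcd : Nat.gcd w w' = w' := Nat.gcd_eq_right ⟨d, by rw [hw', mul_comm]⟩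
    rw [hgcd, hw', Nat.mul_div_cancel _ (Nat.pos_of_ne_zero hw'0)]
  exact ⟨w' • g, key, hord⟩

lemma card_nker [Finite Q] [IsAddCyclic Q] (u : ℕ) :
    Nat.card (nker Q u) = Nat.gcd u (Nat.card Q) := by
  obtain ⟨x, h1, h2⟩ := nker_spec (Q := Q) u
  rw [h1, Nat.card_zmultiples, h2]

lemma isAddCyclic_zmultiples {x : Q} : IsAddCyclic (zmultiples x) := by
  apply isAddCyclic_of_surjective (zmultiplesHom _ (⟨x, mem_zmultiples x⟩ : zmultiples x))
  rintro ⟨y, hy⟩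
  obtain ⟨k, hk⟩ := mem_zmultiples_iff.mp hy
  exact ⟨k, Subtype.ext (by simpa using hk)⟩


end PartB

section PartC

instance finite_addMonoidHom (A Q : Type*) [AddMonoid A] [AddMonoid Q] [Finite A] [Finite Q] :
    Finite (A →+ Q) :=
  Finite.of_injective (fun f => (f : A → Q)) DFunLike.coe_injective

lemma card_addMonoidHom (A Q : Type*) [AddCommGroup A] [Finite A] [IsAddCyclic A]
    [AddCommGroup Q] [Finite Q] [IsAddCyclic Q] :
    Nat.card (A →+ Q) = Nat.gcd (Nat.card A) (Nat.card Q) := by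
  obtain ⟨g, hg⟩ := IsAddCyclic.exists_generator (α := A)
  have hgord : addOrderOf g = Nat.card A := addOrderOf_eq_card_of_forall_mem_zmultiples hg
  have e : (A →+ Q) ≃ nker Q (Nat.card A) :=
    { toFun := fun f => ⟨f g, by
        rw [mem_nker, ← map_nsmul, ← hgord, addOrderOf_nsmul_eq_zero, map_zero]⟩
      invFun := fun q => addMonoidHomOfForallMemZMultiples hg
        (show addOrderOf (q : Q) ∣ addOrderOf g by
          rw [hgord]; exact addOrderOf_dvd_of_nsmul_eq_zero q.2)
      left_inv := fun f => by
        refine (AddMonoidHom.eq_iff_eq_on_generator hg _ f).mpr ?_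
        exact addMonoidHomOfForallMemZMultiples_apply_gen hg _
      right_inv := fun q => Subtype.ext (addMonoidHomOfForallMemZMultiples_apply_gen hg _) }
  rw [Nat.card_congr e, card_nker]

lemma le_nker_card {Q : Type*} [AddCommGroup Q] [Finite Q] (A : AddSubgroup Q) :
    A ≤ nker Q (Nat.card A) := by
  intro x hx
  rw [mem_nker]
  have h : (Nat.card A) • (⟨x, hx⟩ : A) = 0 := card_nsmul_eq_zero'
  calc (Nat.card A) • x = (((Nat.card A) • (⟨x, hx⟩ : A) : A) : Q) := rfl
  _ = 0 := by rw [h]; rfl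

lemma eq_nker_card {Q : Type*} [AddCommGroup Q] [Finite Q] [IsAddCyclic Q] (A : AddSubgroup Q) :
    A = nker Q (Nat.card A) := by
  refine (AddSubgroup.eq_of_le_of_card_ge (le_nker_card A) ?_)
  rw [card_nker, Nat.gcd_eq_left (AddSubgroup.card_addSubgroup_dvd_card A)]

lemma isAddCyclic_addSubgroup {Q : Type*} [AddCommGroup Q] [Finite Q] [IsAddCyclic Q]
    (A : AddSubgroup Q) : IsAddCyclic A := by
  obtain ⟨x, hx, -⟩ := nker_spec (Q := Q) (Nat.card A)
  have hA : A = AddSubgroup.zmultiples x := (eq_nker_card A).trans hx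
  rw [hA]
  exact isAddCyclic_zmultiples

lemma sum_addSubgroup_eq_sum_divisors {Q : Type*} [AddCommGroup Q] [Finite Q] [IsAddCyclic Q]
    [Fintype (AddSubgroup Q)] (F : ℕ → ℂ) :
    ∑ A : AddSubgroup Q, F (Nat.card A) = ∑ u ∈ (Nat.card Q).divisors, F u := by
  refine Finset.sum_bij' (fun A _ => Nat.card A) (fun u _ => nker Q u) ?_ ?_ ?_ ?_ ?_
  · intro A _
    rw [Nat.mem_divisors]
    exact ⟨AddSubgroup.card_addSubgroup_dvd_card A, Nat.card_pos.ne'⟩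
  · intro u _; exact Finset.mem_univ _
  · intro A _; exact (eq_nker_card A).symm
  · intro u hu
    show Nat.card (nker Q u) = u
    rw [card_nker, Nat.gcd_eq_left (Nat.mem_divisors.mp hu).1]
  · intro A _; rfl

end PartC


lemma cpow_mul_nat (a b : ℕ) (t : ℂ) :
    ((a * b : ℕ) : ℂ) ^ t = (a : ℂ) ^ t * (b : ℂ) ^ t := by
  have h := Complex.mul_cpow_ofReal_nonneg (Nat.cast_nonneg a) (Nat.cast_nonneg b) t
  push_cast at h ⊢
  exact h

lemma sum_filter_mult (m d : ℕ) (hm : m ≠ 0) (hd : d ∣ m) (f : ℕ → ℂ) :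
    ∑ u ∈ m.divisors.filter (fun u => d ∣ u), f u = ∑ u' ∈ (m / d).divisors, f (d * u') := by
  have hd0 : 0 < d := Nat.pos_of_ne_zero (fun h => hm (by simpa [h] using hd))
  refine Finset.sum_bij' (fun u _ => u / d) (fun u' _ => d * u') ?_ ?_ ?_ ?_ ?_
  · intro u hu
    obtain ⟨hum, hdu⟩ := Finset.mem_filter.mp hu
    rw [Nat.mem_divisors] at hum
    obtain ⟨u1, rfl⟩ := hdu
    obtain ⟨m1, rfl⟩ := hd
    have hm1 : m1 ≠ 0 := by rintro rfl; simp at hm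
    refine Nat.mem_divisors.mpr ⟨?_, ?_⟩
    · show d * u1 / d ∣ d * m1 / d
      rw [Nat.mul_div_cancel_left _ hd0, Nat.mul_div_cancel_left _ hd0]
      exact (mul_dvd_mul_iff_left hd0.ne').mp hum.1
    · rw [Nat.mul_div_cancel_left _ hd0]; exact hm1
  · intro u' hu'
    rw [Nat.mem_divisors] at hu'
    exact Finset.mem_filter.mpr ⟨Nat.mem_divisors.mpr
      ⟨(Nat.dvd_div_iff_mul_dvd hd).mp hu'.1, hm⟩, dvd_mul_right d u'⟩
  · intro u hu
    exact Nat.mul_div_cancel' (Finset.mem_filter.mp hu).2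
  · intro u' _
    exact Nat.mul_div_cancel_left _ hd0
  · intro u hu
    rw [Nat.mul_div_cancel' (Finset.mem_filter.mp hu).2]

lemma gcd_eq_sum (m n u w : ℕ) (hm : m ≠ 0) (hn : n ≠ 0) (hu : u ∣ m) (hw : w ∣ n) :
    (Nat.gcd u w : ℂ) = ∑ d ∈ (Nat.gcd m n).divisors,
      if d ∣ u ∧ d ∣ w then (Nat.totient d : ℂ) else 0 := by
  rw [← Finset.sum_filter]
  have hu0 : u ≠ 0 := fun h => hm (by simpa [h] using hu)
  have hfil : (Nat.gcd m n).divisors.filter (fun d => d ∣ u ∧ d ∣ w) = (Nat.gcd u w).divisors := by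
    ext d
    simp only [Finset.mem_filter, Nat.mem_divisors, Nat.dvd_gcd_iff]
    constructor
    · rintro ⟨⟨_, _⟩, hdu, hdw⟩
      exact ⟨⟨hdu, hdw⟩, fun h => hu0 (Nat.eq_zero_of_gcd_eq_zero_left h)⟩
    · rintro ⟨⟨hdu, hdw⟩, _⟩
      refine ⟨⟨⟨hdu.trans hu, hdw.trans hw⟩, ?_⟩, hdu, hdw⟩
      intro h
      exact hm (Nat.eq_zero_of_gcd_eq_zero_left h)
  rw [hfil, ← Nat.cast_sum, Nat.sum_totient]

lemma keyIdentity (m n : ℕ) (hm : 0 < m) (hn : 0 < n) (t : ℂ) :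
    ∑ u ∈ m.divisors, ∑ v ∈ n.divisors, (Nat.gcd u (n / v) : ℂ) * ((u * v : ℕ) : ℂ) ^ t
      = ∑ d ∈ (Nat.gcd m n).divisors, (Nat.totient d : ℂ) * (d : ℂ) ^ t *
          (∑ e ∈ (m / d).divisors, (e : ℂ) ^ t) *
          (∑ e ∈ (n / d).divisors, (e : ℂ) ^ t) := by
  -- step 1: replace v by n / w
  have step1 : ∀ u ∈ m.divisors,
      ∑ v ∈ n.divisors, (Nat.gcd u (n / v) : ℂ) * ((u * v : ℕ) : ℂ) ^ t
        = ∑ w ∈ n.divisors, (Nat.gcd u w : ℂ) * (u : ℂ) ^ t * ((n / w : ℕ) : ℂ) ^ t := by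
    intro u _
    rw [← Nat.sum_div_divisors n (fun w => (Nat.gcd u w : ℂ) * (u : ℂ) ^ t * ((n / w : ℕ) : ℂ) ^ t)]
    refine Finset.sum_congr rfl fun v hv => ?_
    rw [Nat.div_div_self (Nat.mem_divisors.mp hv).1 hn.ne', cpow_mul_nat, mul_assoc]
  rw [Finset.sum_congr rfl step1]
  -- step 2: expand gcd as totient sum and push in
  have step2 : ∀ u ∈ m.divisors, ∀ w ∈ n.divisors,
      (Nat.gcd u w : ℂ) * (u : ℂ) ^ t * ((n / w : ℕ) : ℂ) ^ t
        = ∑ d ∈ (Nat.gcd m n).divisors,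
            (if d ∣ u ∧ d ∣ w then (Nat.totient d : ℂ) * (u : ℂ) ^ t * ((n / w : ℕ) : ℂ) ^ t else 0) := by
    intro u hu w hw
    rw [gcd_eq_sum m n u w hm.ne' hn.ne' (Nat.mem_divisors.mp hu).1 (Nat.mem_divisors.mp hw).1]
    rw [Finset.sum_mul, Finset.sum_mul]
    refine Finset.sum_congr rfl fun d _ => ?_
    by_cases h : d ∣ u ∧ d ∣ w <;> simp [h]
  rw [Finset.sum_congr rfl fun u hu => Finset.sum_congr rfl fun w hw => step2 u hu w hw]
  -- step 3: reorder sums to put d outside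
  rw [Finset.sum_congr rfl fun u _ => Finset.sum_comm, Finset.sum_comm]
  -- step 4: for each d, evaluate the double sum
  refine Finset.sum_congr rfl fun d hd => ?_
  have hdm : d ∣ m := (Nat.mem_divisors.mp hd).1.trans (Nat.gcd_dvd_left m n)
  have hdn : d ∣ n := (Nat.mem_divisors.mp hd).1.trans (Nat.gcd_dvd_right m n)
  have inner : ∀ u ∈ m.divisors,
      ∑ w ∈ n.divisors, (if d ∣ u ∧ d ∣ w then (Nat.totient d : ℂ) * (u : ℂ) ^ t * ((n / w : ℕ) : ℂ) ^ t else 0)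
        = (if d ∣ u then (u : ℂ) ^ t else 0) *
            ((Nat.totient d : ℂ) * ∑ w ∈ n.divisors.filter (fun w => d ∣ w), ((n / w : ℕ) : ℂ) ^ t) := by
    intro u _
    by_cases h : d ∣ u
    · simp only [h, true_and, if_true, Finset.mul_sum, ← Finset.sum_filter]
      refine Finset.sum_congr rfl fun w _ => by ring
    · simp [h]
  rw [Finset.sum_congr rfl inner, ← Finset.sum_mul, ← Finset.sum_filter]
  -- now compute the two filtered sums
  have hA : ∑ u ∈ m.divisors.filter (fun u => d ∣ u), (u : ℂ) ^ t
      = (d : ℂ) ^ t * ∑ e ∈ (m / d).divisors, (e : ℂ) ^ t := by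
    rw [sum_filter_mult m d hm.ne' hdm, Finset.mul_sum]
    exact Finset.sum_congr rfl fun e _ => by rw [cpow_mul_nat]
  have hB : ∑ w ∈ n.divisors.filter (fun w => d ∣ w), ((n / w : ℕ) : ℂ) ^ t
      = ∑ e ∈ (n / d).divisors, (e : ℂ) ^ t := by
    rw [sum_filter_mult n d hn.ne' hdn (fun w => ((n / w : ℕ) : ℂ) ^ t)]
    rw [← Nat.sum_div_divisors (n / d) (fun e => ((e : ℕ) : ℂ) ^ t)]
    refine Finset.sum_congr rfl fun w' hw' => ?_
    rw [Nat.div_div_eq_div_mul]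
  rw [hA, hB]
  ring


theorem sigma_t_subgroups (m n : ℕ) (hm : 0 < m) (hn : 0 < n) (t : ℂ) :
    (∑ᶠ H : AddSubgroup (ZMod m × ZMod n), (Nat.card H : ℂ) ^ t) =
      ∑ d ∈ (Nat.gcd m n).divisors,
        (Nat.totient d : ℂ) * (d : ℂ) ^ t *
          (∑ e ∈ (m / d).divisors, (e : ℂ) ^ t) *
          (∑ e ∈ (n / d).divisors, (e : ℂ) ^ t) := by
  haveI : NeZero m := ⟨hm.ne'⟩
  haveI : NeZero n := ⟨hn.ne'⟩
  classical
  haveI F1 : Fintype (AddSubgroup (ZMod m × ZMod n)) := Fintype.ofFinite _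
  haveI F2 : Fintype (AddSubgroup (ZMod m)) := Fintype.ofFinite _
  haveI F3 : Fintype (AddSubgroup (ZMod n)) := Fintype.ofFinite _
  haveI F4 : ∀ (A : AddSubgroup (ZMod m)) (B : AddSubgroup (ZMod n)),
      Fintype (A →+ ZMod n ⧸ B) := fun A B => Fintype.ofFinite _
  haveI IC1 : ∀ A : AddSubgroup (ZMod m), IsAddCyclic A := fun A => isAddCyclic_addSubgroup A
  haveI IC2 : ∀ B : AddSubgroup (ZMod n), IsAddCyclic (ZMod n ⧸ B) := fun B =>
    isAddCyclic_of_surjective (QuotientAddGroup.mk' B) (QuotientAddGroup.mk'_surjective B)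
  rw [finsum_eq_sum_of_fintype]
  have hbij : Function.Bijective
      (fun x : (Σ A : AddSubgroup (ZMod m), Σ B : AddSubgroup (ZMod n), (A →+ ZMod n ⧸ B)) =>
        smk x.1 x.2.1 x.2.2) := by
    constructor
    · rintro ⟨A, B, f⟩ ⟨A', B', f'⟩ h
      simp only at h
      obtain rfl : A = A' := by rw [← smk_fst A B f, ← smk_fst A' B' f', h]
      obtain rfl : B = B' := by rw [← smk_inr A B f, ← smk_inr A B' f', h]
      obtain rfl : f = f' := smk_inj_f A B f f' h
      rfl
    · intro H
      exact ⟨⟨pA H, pB H, pf H⟩, smk_pf H⟩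
  have h1 : ∑ H : AddSubgroup (ZMod m × ZMod n), (Nat.card H : ℂ) ^ t
      = ∑ x : (Σ A : AddSubgroup (ZMod m), Σ B : AddSubgroup (ZMod n), (A →+ ZMod n ⧸ B)),
          ((Nat.card x.1 * Nat.card x.2.1 : ℕ) : ℂ) ^ t := by
    refine (Fintype.sum_bijective _ hbij _ _ fun x => ?_).symm
    rw [card_H, smk_fst, smk_inr]
  rw [h1]
  rw [← Finset.univ_sigma_univ, Finset.sum_sigma]
  have h2 : ∀ A : AddSubgroup (ZMod m),
      (∑ x : (Σ B : AddSubgroup (ZMod n), (A →+ ZMod n ⧸ B)),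
          ((Nat.card A * Nat.card x.1 : ℕ) : ℂ) ^ t)
        = ∑ v ∈ n.divisors, (Nat.gcd (Nat.card A) (n / v) : ℂ) * (((Nat.card A) * v : ℕ) : ℂ) ^ t := by
    intro A
    rw [← Finset.univ_sigma_univ, Finset.sum_sigma]
    have h3 : ∀ B : AddSubgroup (ZMod n),
        (∑ _f : (A →+ ZMod n ⧸ B), ((Nat.card A * Nat.card B : ℕ) : ℂ) ^ t)
          = (Nat.gcd (Nat.card A) (n / Nat.card B) : ℂ) * ((Nat.card A * Nat.card B : ℕ) : ℂ) ^ t := by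
      intro B
      rw [Finset.sum_const, Finset.card_univ, ← Nat.card_eq_fintype_card, nsmul_eq_mul]
      congr 1
      rw [card_addMonoidHom]
      congr 1
      have h := AddSubgroup.card_eq_card_quotient_mul_card_addSubgroup B
      rw [Nat.card_zmod] at h
      rw [(Nat.div_eq_of_eq_mul_left Nat.card_pos h).symm]
    rw [Finset.sum_congr rfl fun B _ => h3 B]
    have := sum_addSubgroup_eq_sum_divisors (Q := ZMod n)
      (fun v => (Nat.gcd (Nat.card A) (n / v) : ℂ) * ((Nat.card A * v : ℕ) : ℂ) ^ t)
    rwa [Nat.card_zmod] at this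
  rw [Finset.sum_congr rfl fun A _ => h2 A]
  have houter := sum_addSubgroup_eq_sum_divisors (Q := ZMod m)
    (fun u => ∑ v ∈ n.divisors, (Nat.gcd u (n / v) : ℂ) * ((u * v : ℕ) : ℂ) ^ t)
  rw [Nat.card_zmod] at houter
  rw [houter]
  exact keyIdentity m n hm hn t
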